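/- Let p > 1, m > 1, a ∈ ℝ, and let w be the homoclinic solution of the core problem. Suppose v : ℝ → ℝ is twice continuously differentiable with v''(y) = −a·w(y)^m for all y, the derivative v' tends to finite limits L₊ as y → +∞ and L₋ as y → −∞, the functions y ↦ w(y)^{p+1}·v(y) and y ↦ w(y)^{p+1}·v'(y) are integrable with w(y)^{p+1}·v(y) → 0 as |y| → ∞, and ∫_ℝ (w^{p+1})'(y)·v(y) dy = 0. Then L₊ + L₋ = 0. -/

import Mathlib

open MeasureTheory Real Filter

/-- The homoclinic solution of the core problem `w'' - w + w^p = 0`. -/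
noncomputable def w (p : ℝ) (y : ℝ) : ℝ :=
  ((p + 1) / 2) ^ (1 / (p - 1)) * (1 / Real.cosh ((p - 1) * y / 2)) ^ (2 / (p - 1))

section Aux

variable {p : ℝ}

lemma w_pos (hp : 1 < p) (y : ℝ) : 0 < w p y :=
  mul_pos (Real.rpow_pos_of_pos (by linarith) _)
    (Real.rpow_pos_of_pos (div_pos one_pos (Real.cosh_pos _)) _)

lemma w_even (p y : ℝ) : w p (-y) = w p y := by
  unfold w
  rw [show (p - 1) * (-y) / 2 = -((p - 1) * y / 2) by ring, Real.cosh_neg]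

lemma continuous_tanh' : Continuous Real.tanh := by
  have h : Real.tanh = fun x => Real.sinh x / Real.cosh x :=
    funext Real.tanh_eq_sinh_div_cosh
  rw [h]
  exact Real.continuous_sinh.div Real.continuous_cosh fun x => (Real.cosh_pos x).ne'

lemma w_cont (hp : 1 < p) : Continuous (w p) := by
  unfold w
  refine continuous_const.mul (Continuous.rpow_const ?_ ?_)
  · exact continuous_const.div (Real.continuous_cosh.comp (by continuity))
      (fun y => (Real.cosh_pos _).ne')
  · exact fun y => Or.inl (div_pos one_pos (Real.cosh_pos _)).ne'

lemma abs_tanh_le_one (x : ℝ) : |Real.tanh x| ≤ 1 := by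
  rw [Real.tanh_eq_sinh_div_cosh, abs_div, abs_of_pos (Real.cosh_pos x),
    div_le_one (Real.cosh_pos x)]
  have h := Real.cosh_sq x
  rcases abs_cases (Real.sinh x) with ⟨h1, _⟩ | ⟨h1, _⟩ <;> nlinarith [Real.cosh_pos x]

lemma w_hasDerivAt (hp : 1 < p) (y : ℝ) :
    HasDerivAt (w p) (-Real.tanh ((p - 1) * y / 2) * w p y) y := by
  have hp1 : p - 1 ≠ 0 := by intro h; linarith [sub_eq_zero.mp h]
  have hin : HasDerivAt (fun t : ℝ => (p - 1) * t / 2) ((p - 1) / 2) y := by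
    simpa using ((hasDerivAt_id y).const_mul (p - 1)).div_const 2
  have hcosh : HasDerivAt (fun t : ℝ => Real.cosh ((p - 1) * t / 2))
      (Real.sinh ((p - 1) * y / 2) * ((p - 1) / 2)) y :=
    (Real.hasDerivAt_cosh _).comp y hin
  have hc := Real.cosh_pos ((p - 1) * y / 2)
  have hinv : HasDerivAt (fun t : ℝ => 1 / Real.cosh ((p - 1) * t / 2))
      (-(Real.sinh ((p - 1) * y / 2) * ((p - 1) / 2)) / Real.cosh ((p - 1) * y / 2) ^ 2) y := by
    simpa [one_div] using hcosh.fun_inv hc.ne'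
  have hs0 : (1 / Real.cosh ((p - 1) * y / 2)) ≠ 0 := (div_pos one_pos hc).ne'
  have hrpow := hinv.rpow_const (p := 2 / (p - 1)) (Or.inl hs0)
  have hw := hrpow.const_mul (((p + 1) / 2) ^ (1 / (p - 1)) : ℝ)
  have hfun : w p = fun t : ℝ =>
      ((p + 1) / 2) ^ (1 / (p - 1)) * (1 / Real.cosh ((p - 1) * t / 2)) ^ (2 / (p - 1)) := rfl
  rw [hfun]
  refine hw.congr_deriv (Eq.symm ?_)
  rw [Real.rpow_sub_one hs0, Real.tanh_eq_sinh_div_cosh]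
  set S := (1 / Real.cosh ((p - 1) * y / 2)) ^ (2 / (p - 1)) with hS
  field_simp
  ring
end Aux

section Aux2

variable {p : ℝ}

lemma wp1_hasDerivAt (hp : 1 < p) (y : ℝ) :
    HasDerivAt (fun t => w p t ^ (p + 1))
      (-(p + 1) * Real.tanh ((p - 1) * y / 2) * w p y ^ (p + 1)) y := by
  have h := (w_hasDerivAt hp y).rpow_const (p := p + 1) (Or.inl (w_pos hp y).ne')
  convert h using 1
  rw [show p + 1 - 1 = p by ring, Real.rpow_add_one (w_pos hp y).ne' p]
  ring

lemma integrable_exp_neg_abs_mul {b : ℝ} (hb : 0 < b) :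
    Integrable (fun y : ℝ => Real.exp (-(b * |y|))) := by
  have hIoi : IntegrableOn (fun y : ℝ => Real.exp (-(b * |y|))) (Set.Ioi 0) := by
    apply (exp_neg_integrableOn_Ioi 0 hb).congr_fun ?_ measurableSet_Ioi
    intro x hx
    simp only []
    rw [abs_of_pos hx, neg_mul]
  rw [← integrableOn_univ, ← Set.Iio_union_Ici (a := (0 : ℝ)), integrableOn_union,
    integrableOn_Ici_iff_integrableOn_Ioi]
  refine ⟨?_, hIoi⟩
  rw [← (Measure.measurePreserving_neg (volume : Measure ℝ)).integrableOn_comp_preimage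
      (Homeomorph.neg ℝ).measurableEmbedding]
  simpa [Function.comp_def, abs_neg] using hIoi

lemma w_le_exp (hp : 1 < p) (y : ℝ) :
    w p y ≤ ((p + 1) / 2) ^ (1 / (p - 1)) * 2 ^ (2 / (p - 1)) * Real.exp (-|y|) := by
  have hp1 : (0 : ℝ) < p - 1 := by linarith
  set u := (p - 1) * y / 2 with hu
  have hc := Real.cosh_pos u
  have hexp : Real.exp |u| ≤ 2 * Real.cosh u := by
    rw [Real.cosh_eq]
    rcases abs_cases u with ⟨h1, _⟩ | ⟨h1, _⟩ <;> rw [h1] <;>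
      nlinarith [Real.exp_pos u, Real.exp_pos (-u)]
  have hs : 1 / Real.cosh u ≤ 2 * Real.exp (-|u|) := by
    rw [Real.exp_neg, ← div_eq_mul_inv, div_le_div_iff₀ hc (Real.exp_pos _)]
    linarith
  have hq : (0 : ℝ) ≤ 2 / (p - 1) := by positivity
  have hs0 : (0 : ℝ) < 1 / Real.cosh u := div_pos one_pos hc
  have h1 : (1 / Real.cosh u) ^ (2 / (p - 1)) ≤ (2 * Real.exp (-|u|)) ^ (2 / (p - 1)) :=
    Real.rpow_le_rpow hs0.le hs hq
  have h2 : (2 * Real.exp (-|u|)) ^ (2 / (p - 1)) = 2 ^ (2 / (p - 1)) * Real.exp (-|y|) := by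
    rw [Real.mul_rpow (by norm_num) (Real.exp_nonneg _), ← Real.exp_mul]
    congr 1
    have habs : |u| = (p - 1) * |y| / 2 := by
      rw [hu, abs_div, abs_mul, abs_of_pos hp1]
      norm_num
    rw [habs]
    field_simp
  have hA : (0 : ℝ) ≤ ((p + 1) / 2) ^ (1 / (p - 1)) :=
    (Real.rpow_pos_of_pos (by linarith) _).le
  show ((p + 1) / 2) ^ (1 / (p - 1)) * (1 / Real.cosh ((p - 1) * y / 2)) ^ (2 / (p - 1)) ≤ _
  calc ((p + 1) / 2) ^ (1 / (p - 1)) * (1 / Real.cosh ((p - 1) * y / 2)) ^ (2 / (p - 1))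
      ≤ ((p + 1) / 2) ^ (1 / (p - 1)) * (2 ^ (2 / (p - 1)) * Real.exp (-|y|)) :=
        mul_le_mul_of_nonneg_left (h1.trans_eq h2) hA
    _ = _ := by ring

lemma integrable_w_rpow (hp : 1 < p) {r : ℝ} (hr : 0 < r) :
    Integrable (fun y : ℝ => w p y ^ r) := by
  set C := ((p + 1) / 2) ^ (1 / (p - 1)) * 2 ^ (2 / (p - 1)) with hC
  have hC0 : (0 : ℝ) < C := by
    exact mul_pos (Real.rpow_pos_of_pos (by linarith) _) (Real.rpow_pos_of_pos (by norm_num) _)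
  apply Integrable.mono' ((integrable_exp_neg_abs_mul hr).const_mul (C ^ r))
  · exact ((w_cont hp).rpow_const (fun y => Or.inl (w_pos hp y).ne')).aestronglyMeasurable
  · refine ae_of_all _ fun y => ?_
    rw [Real.norm_eq_abs, abs_of_pos (Real.rpow_pos_of_pos (w_pos hp y) r)]
    calc w p y ^ r ≤ (C * Real.exp (-|y|)) ^ r :=
          Real.rpow_le_rpow (w_pos hp y).le (w_le_exp hp y) hr.le
      _ = C ^ r * Real.exp (-(r * |y|)) := by
          rw [Real.mul_rpow hC0.le (Real.exp_nonneg _), ← Real.exp_mul]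
          ring_nf

lemma integral_odd_eq_zero {f : ℝ → ℝ} (hodd : ∀ y, f (-y) = -f y) : ∫ y, f y = 0 := by
  have h : (∫ y : ℝ, f (-y)) = ∫ y : ℝ, f y := integral_neg_eq_self f volume
  have h2 : (∫ y : ℝ, f (-y)) = ∫ y : ℝ, -f y := by simp_rw [hodd]
  rw [h2, integral_neg] at h
  linarith

end Aux2

/-- Balance condition lemma: if `v'' = -a w^m` and `∫ (w^(p+1))' v = 0`, then
`v'(+∞) + v'(-∞) = 0`. -/
theorem balance_condition (p m a : ℝ) (hp : 1 < p) (hm : 1 < m)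
    (v : ℝ → ℝ) (hv : ContDiff ℝ 2 v)
    (hv'' : ∀ y : ℝ, deriv (deriv v) y = -a * (w p y) ^ m)
    (Lplus Lminus : ℝ)
    (hLplus : Tendsto (deriv v) atTop (nhds Lplus))
    (hLminus : Tendsto (deriv v) atBot (nhds Lminus))
    (hint1 : Integrable (fun y : ℝ => (w p y) ^ (p + 1) * v y))
    (hint2 : Integrable (fun y : ℝ => (w p y) ^ (p + 1) * deriv v y))
    (hlim : Tendsto (fun y : ℝ => (w p y) ^ (p + 1) * v y) (cocompact ℝ) (nhds 0))
    (horth : ∫ y : ℝ, deriv (fun t : ℝ => (w p t) ^ (p + 1)) y * v y = 0) :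
    Lplus + Lminus = 0 := by
  have hw_pos := w_pos hp
  have hcv : Differentiable ℝ v := hv.differentiable (by norm_num)
  have hdv : Differentiable ℝ (deriv v) := by
    have h2 : ContDiff ℝ ((1 : ℕ) + 1) v := by exact_mod_cast hv
    have h := (contDiff_succ_iff_deriv (n := 1)).mp h2
    exact h.2.2.differentiable one_ne_zero
  have hder2 : ∀ y, HasDerivAt (deriv v) (-a * w p y ^ m) y := fun y =>
    (hv'' y) ▸ (hdv y).hasDerivAt
  set c0 := deriv v 0 with hc0
  have hwm_cont : Continuous fun t => w p t ^ m :=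
    (w_cont hp).rpow_const fun y => Or.inl (hw_pos y).ne'
  set g : ℝ → ℝ := fun y => ∫ t in (0 : ℝ)..y, -a * w p t ^ m with hg
  have hveq : ∀ y, deriv v y = c0 + g y := by
    intro y
    have h := intervalIntegral.integral_eq_sub_of_hasDerivAt
      (f := deriv v) (f' := fun t => -a * w p t ^ m) (a := 0) (b := y)
      (fun t _ => hder2 t) ((continuous_const.mul hwm_cont).intervalIntegrable 0 y)
    have : g y = deriv v y - c0 := h
    linarith
  have hg_odd : ∀ y, g (-y) = -g y := by
    intro y
    have h2 := intervalIntegral.integral_comp_neg (a := (0 : ℝ)) (b := -y)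
      (f := fun t => -a * w p t ^ m)
    simp only [neg_neg, neg_zero] at h2
    have h3 : (∫ x in (0 : ℝ)..(-y), -a * w p (-x) ^ m) = g (-y) := by
      apply intervalIntegral.integral_congr
      intro x _
      show -a * w p (-x) ^ m = -a * w p x ^ m
      rw [w_even]
    rw [← h3, h2, intervalIntegral.integral_symm]
  have hgt : Tendsto g atTop (nhds (Lplus - c0)) := by
    have hfun : g = fun y => deriv v y - c0 := funext fun y => by rw [hveq y]; ring
    rw [hfun]
    exact hLplus.sub tendsto_const_nhds
  have hLm : Lminus = 2 * c0 - Lplus := by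
    have h1 : Tendsto (fun y => deriv v (-y)) atTop (nhds Lminus) :=
      hLminus.comp tendsto_neg_atTop_atBot
    have h2 : Tendsto (fun y => deriv v (-y)) atTop (nhds (2 * c0 - Lplus)) := by
      have hfun : (fun y => deriv v (-y)) = fun y => c0 - g y :=
        funext fun y => by rw [hveq (-y), hg_odd]; ring
      rw [hfun]
      have := tendsto_const_nhds (x := c0) (f := atTop (α := ℝ)) |>.sub hgt
      convert this using 2
      ring
    exact tendsto_nhds_unique h1 h2
  -- integration by parts and orthogonality force c0 = 0
  set u : ℝ → ℝ := fun t => w p t ^ (p + 1) with hu_def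
  set u' : ℝ → ℝ := fun y => -(p + 1) * Real.tanh ((p - 1) * y / 2) * w p y ^ (p + 1) with hu'_def
  have hu : ∀ x, HasDerivAt u (u' x) x := wp1_hasDerivAt hp
  have hu_cont : Continuous u :=
    (w_cont hp).rpow_const fun y => Or.inl (hw_pos y).ne'
  have hu'_cont : Continuous u' :=
    ((continuous_const.mul (continuous_tanh'.comp
      ((continuous_const.mul continuous_id).div_const 2))).mul hu_cont)
  have hWint : Integrable u := integrable_w_rpow hp (by linarith)
  have hu'v : Integrable fun y => u' y * v y := by
    apply Integrable.mono' (hint1.norm.const_mul (p + 1))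
    · exact (hu'_cont.mul hcv.continuous).aestronglyMeasurable
    · refine ae_of_all _ fun y => ?_
      have hb : |Real.tanh ((p - 1) * y / 2)| ≤ 1 := abs_tanh_le_one _
      have hwp : (0 : ℝ) < w p y ^ (p + 1) := Real.rpow_pos_of_pos (hw_pos y) _
      have : ‖u' y * v y‖ = (p + 1) * |Real.tanh ((p - 1) * y / 2)| * (w p y ^ (p + 1) * |v y|) := by
        rw [Real.norm_eq_abs, hu'_def]
        simp only [abs_mul, abs_neg, abs_of_pos (show (0:ℝ) < p + 1 by linarith),
          abs_of_pos hwp]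
        ring
      rw [this, Real.norm_eq_abs, abs_mul, abs_of_pos hwp]
      have h1 : (p + 1) * |Real.tanh ((p - 1) * y / 2)| ≤ p + 1 := by
        nlinarith [abs_nonneg (Real.tanh ((p - 1) * y / 2))]
      nlinarith [abs_nonneg (v y), mul_nonneg hwp.le (abs_nonneg (v y)),
        mul_nonneg (mul_nonneg (by linarith : (0:ℝ) ≤ p + 1) (abs_nonneg (Real.tanh ((p - 1) * y / 2)))) (mul_nonneg hwp.le (abs_nonneg (v y)))]
  have hv' : ∀ x, HasDerivAt v (deriv v x) x := fun x => (hcv x).hasDerivAt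
  have huv' : Integrable (u * deriv v) := hint2
  have huv : Integrable (u * v) := hint1
  have hu'v' : Integrable (u' * v) := hu'v
  have hibp := integral_mul_deriv_eq_deriv_mul_of_integrable (fun x _ => hu x) (fun x _ => hv' x) huv' hu'v' huv
  have horth' : (∫ y : ℝ, u' y * v y) = 0 := by
    rw [← horth]
    refine integral_congr_ae (ae_of_all _ fun y => ?_)
    show u' y * v y = deriv u y * v y
    rw [(hu y).deriv]
  have hkey : (∫ y : ℝ, u y * deriv v y) = 0 := by
    rw [hibp, horth', neg_zero]
  have hgint : Integrable fun y => u y * g y := by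
    have hfun : (fun y => u y * g y) = fun y => u y * deriv v y - c0 * u y :=
      funext fun y => by rw [hveq y]; ring
    rw [hfun]
    exact hint2.sub (hWint.const_mul c0)
  have hodd0 : (∫ y : ℝ, u y * g y) = 0 := by
    apply integral_odd_eq_zero
    intro y
    simp only [hu_def]
    rw [w_even, hg_odd]
    ring
  have hsplit : (∫ y : ℝ, u y * deriv v y) = c0 * (∫ y : ℝ, u y) + ∫ y : ℝ, u y * g y := by
    have hfun : (fun y => u y * deriv v y) = fun y => c0 * u y + u y * g y :=
      funext fun y => by rw [hveq y]; ring
    rw [hfun, integral_add (hWint.const_mul c0) hgint, MeasureTheory.integral_const_mul]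
  have hIpos : 0 < ∫ y : ℝ, u y :=
    integral_pos_of_integrable_nonneg_nonzero (x := 0) hu_cont hWint
      (fun y => (Real.rpow_pos_of_pos (hw_pos y) _).le) (Real.rpow_pos_of_pos (hw_pos 0) _).ne'
  have hc00 : c0 = 0 := by
    rw [hsplit, hodd0, add_zero] at hkey
    rcases mul_eq_zero.mp hkey with h | h
    · exact h
    · exact absurd h hIpos.ne'
  rw [hLm, hc00]
  ring
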